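/- Let Γ ⊂ Aff(V) be a virtually abelian group. Then there exists a finite-index abelian subgroup Γ̃ ⊆ Γ such that every affine transformation α normalizing Γ (α⁻¹Γα = Γ) also normalizes Γ̃ (α⁻¹Γ̃α = Γ̃). -/

import Mathlib

/-! Auxiliary general group theory: the FC-centre relative to a subgroup `Γ`,
and the fact that its centralizer within `Γ` is a canonical abelian finite-index
subgroup of a virtually abelian `Γ`. -/

/-- The set of elements of `Γ` whose centralizer has finite index in `Γ`. -/
def fcCentre {G : Type*} [Group G] (Γ : Subgroup G) : Subgroup G where
  carrier := {g | g ∈ Γ ∧ (Subgroup.centralizer {g}).relIndex Γ ≠ 0}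
  one_mem' := by
    refine ⟨one_mem _, ?_⟩
    have h : Subgroup.centralizer ({1} : Set G) = ⊤ := by
      ext x; simp [Subgroup.mem_centralizer_iff]
    rw [h, Subgroup.relIndex_top_left]
    exact one_ne_zero
  mul_mem' := by
    rintro a b ⟨haΓ, hac⟩ ⟨hbΓ, hbc⟩
    refine ⟨mul_mem haΓ hbΓ, ?_⟩
    have hle : Subgroup.centralizer ({a} : Set G) ⊓ Subgroup.centralizer ({b} : Set G) ≤
        Subgroup.centralizer ({a * b} : Set G) := by
      intro x hx
      obtain ⟨hxa, hxb⟩ := Subgroup.mem_inf.mp hx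
      apply Subgroup.mem_centralizer_iff.mpr
      rintro h rfl
      have h1 := Subgroup.mem_centralizer_iff.mp hxa a rfl
      have h2 := Subgroup.mem_centralizer_iff.mp hxb b rfl
      calc a * b * x = a * (b * x) := by group
        _ = a * (x * b) := by rw [h2]
        _ = (a * x) * b := by group
        _ = (x * a) * b := by rw [h1]
        _ = x * (a * b) := by group
    intro h0
    exact Subgroup.relIndex_inf_ne_zero hac hbc
      (Subgroup.relIndex_eq_zero_of_le_left hle h0)
  inv_mem' := by
    rintro a ⟨haΓ, hac⟩
    refine ⟨inv_mem haΓ, ?_⟩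
    have hle : Subgroup.centralizer ({a} : Set G) ≤ Subgroup.centralizer ({a⁻¹} : Set G) := by
      intro x hx
      apply Subgroup.mem_centralizer_iff.mpr
      rintro h rfl
      have h1 := Subgroup.mem_centralizer_iff.mp hx a rfl
      calc a⁻¹ * x = a⁻¹ * (x * a) * a⁻¹ := by group
        _ = a⁻¹ * (a * x) * a⁻¹ := by rw [h1]
        _ = x * a⁻¹ := by group
    intro h0
    exact hac (Subgroup.relIndex_eq_zero_of_le_left hle h0)

theorem mem_fcCentre {G : Type*} [Group G] (Γ : Subgroup G) (g : G) :
    g ∈ fcCentre Γ ↔ g ∈ Γ ∧ (Subgroup.centralizer {g}).relIndex Γ ≠ 0 := Iff.rfl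

/-- Main general-group version. -/
theorem virtually_abelian_characteristic_subgroup_aux
    {G : Type*} [Group G] (Γ : Subgroup G)
    (hva : ∃ Γ' : Subgroup G, Γ' ≤ Γ ∧ Γ'.relIndex Γ ≠ 0 ∧
      ∀ a ∈ Γ', ∀ b ∈ Γ', a * b = b * a) :
    ∃ Γt : Subgroup G, Γt ≤ Γ ∧ Γt.relIndex Γ ≠ 0 ∧
      (∀ a ∈ Γt, ∀ b ∈ Γt, a * b = b * a) ∧
      ∀ α : G,
        (∀ γ : G, γ ∈ Γ ↔ α⁻¹ * γ * α ∈ Γ) →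
        (∀ γ : G, γ ∈ Γt ↔ α⁻¹ * γ * α ∈ Γt) := by
  classical
  obtain ⟨Γ', hle, hrel, hcomm⟩ := hva
  set Δ : Subgroup G := fcCentre Γ with hΔ
  set Γt : Subgroup G := Subgroup.centralizer (Δ : Set G) ⊓ Γ with hΓt
  -- Γ' ≤ Δ
  have hΓ'Δ : Γ' ≤ Δ := by
    intro a ha
    refine ⟨hle ha, ?_⟩
    have hcen : Γ' ≤ Subgroup.centralizer ({a} : Set G) := by
      intro x hx
      apply Subgroup.mem_centralizer_iff.mpr
      rintro h rfl
      exact hcomm _ ha _ hx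
    intro h0
    exact hrel (Subgroup.relIndex_eq_zero_of_le_left hcen h0)
  have hΔΓ : Δ ≤ Γ := fun g hg => hg.1
  have hΔrel : Δ.relIndex Γ ≠ 0 := by
    intro h0
    exact hrel (Subgroup.relIndex_eq_zero_of_le_left hΓ'Δ h0)
  -- Γ' has finite relIndex in Δ
  have hΓ'Δrel : Γ'.relIndex Δ ≠ 0 := by
    intro h0
    apply hrel
    rw [← Subgroup.relIndex_mul_relIndex Γ' Δ Γ hΓ'Δ hΔΓ, h0, zero_mul]
  -- the quotient Δ / Γ' is finite
  have hfin : Finite (Δ ⧸ (Γ'.subgroupOf Δ)) := by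
    have : Nat.card (Δ ⧸ (Γ'.subgroupOf Δ)) ≠ 0 := hΓ'Δrel
    exact (Nat.card_ne_zero.mp this).2
  -- the subgroup C of elements of Γ' centralizing all coset representatives
  set C : Subgroup G :=
    Γ' ⊓ ⨅ q : Δ ⧸ (Γ'.subgroupOf Δ),
      Subgroup.centralizer ({((Quotient.out q : Δ) : G)} : Set G) with hC
  have hCrel : C.relIndex Γ ≠ 0 := by
    apply Subgroup.relIndex_inf_ne_zero hrel
    apply Subgroup.relIndex_iInf_ne_zero
    intro q
    exact (Quotient.out q).2.2
  have hCΓt : C ≤ Γt := by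
    intro x hx
    obtain ⟨hxΓ', hxc⟩ := Subgroup.mem_inf.mp hx
    apply Subgroup.mem_inf.mpr
    refine ⟨?_, hle hxΓ'⟩
    apply Subgroup.mem_centralizer_iff.mpr
    intro d hd
    -- d ∈ Δ; write d = r * a with r a coset representative and a ∈ Γ'
    set dd : Δ := ⟨d, hd⟩ with hdd
    set q : Δ ⧸ (Γ'.subgroupOf Δ) := QuotientGroup.mk dd with hq
    set r : Δ := Quotient.out q with hr
    have hrq : (QuotientGroup.mk r : Δ ⧸ (Γ'.subgroupOf Δ)) = QuotientGroup.mk dd :=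
      Quotient.out_eq' q
    have hmem : r⁻¹ * dd ∈ Γ'.subgroupOf Δ := QuotientGroup.eq.mp hrq
    have haΓ' : ((r⁻¹ * dd : Δ) : G) ∈ Γ' := hmem
    -- x commutes with r
    have hxr : ((r : Δ) : G) * x = x * ((r : Δ) : G) := by
      have h1 := Subgroup.mem_iInf.mp hxc q
      exact Subgroup.mem_centralizer_iff.mp h1 _ rfl
    -- x commutes with a := r⁻¹ * d
    have hxa : ((r⁻¹ * dd : Δ) : G) * x = x * ((r⁻¹ * dd : Δ) : G) :=
      hcomm _ haΓ' x hxΓ'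
    have hd_eq : d = ((r : Δ) : G) * ((r⁻¹ * dd : Δ) : G) := by
      push_cast
      group
      rfl
    rw [hd_eq, mul_assoc, hxa, ← mul_assoc, hxr, mul_assoc]
  -- Γt ≤ Δ
  have hΓtΔ : Γt ≤ Δ := by
    intro b hb
    obtain ⟨hbc, hbΓ⟩ := Subgroup.mem_inf.mp hb
    refine ⟨hbΓ, ?_⟩
    have hcen : Δ ≤ Subgroup.centralizer ({b} : Set G) := by
      intro d hd
      apply Subgroup.mem_centralizer_iff.mpr
      rintro h rfl
      exact (Subgroup.mem_centralizer_iff.mp hbc d hd).symm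
    intro h0
    exact hΔrel (Subgroup.relIndex_eq_zero_of_le_left hcen h0)
  -- Γt is abelian
  have habelian : ∀ a ∈ Γt, ∀ b ∈ Γt, a * b = b * a := by
    intro a ha b hb
    have hbΔ : b ∈ Δ := hΓtΔ hb
    have hac := (Subgroup.mem_inf.mp ha).1
    exact (Subgroup.mem_centralizer_iff.mp hac b hbΔ).symm
  refine ⟨Γt, inf_le_right, ?_, habelian, ?_⟩
  · intro h0
    exact hCrel (Subgroup.relIndex_eq_zero_of_le_left hCΓt h0)
  -- invariance
  intro α hα
  -- the conjugation automorphism e γ = α⁻¹ γ α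
  set e : G ≃* G := MulAut.conj α⁻¹ with he
  have he_apply : ∀ γ : G, e γ = α⁻¹ * γ * α := by
    intro γ
    simp [he, MulAut.conj_apply, mul_assoc]
  have heΓ : ∀ g : G, g ∈ Γ ↔ e g ∈ Γ := by
    intro g
    rw [he_apply]
    exact hα g
  have hmapΓ : Subgroup.map e.toMonoidHom Γ = Γ := by
    ext x
    rw [Subgroup.mem_map_equiv]
    constructor
    · intro h
      have h2 := (heΓ _).mp h
      rwa [MulEquiv.apply_symm_apply] at h2
    · intro h
      apply (heΓ _).mpr
      rwa [MulEquiv.apply_symm_apply]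
  -- centralizers map to centralizers
  have hmapcen : ∀ g : G, Subgroup.map e.toMonoidHom (Subgroup.centralizer {g}) =
      Subgroup.centralizer {e g} := by
    intro g
    ext x
    rw [Subgroup.mem_map_equiv]
    constructor
    · intro h
      apply Subgroup.mem_centralizer_iff.mpr
      rintro h' rfl
      have h1 := Subgroup.mem_centralizer_iff.mp h g rfl
      apply e.symm.injective
      simp only [map_mul, MulEquiv.symm_apply_apply]
      exact h1
    · intro h
      apply Subgroup.mem_centralizer_iff.mpr
      rintro h' rfl
      have h1 := Subgroup.mem_centralizer_iff.mp h (e h') rfl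
      apply e.injective
      simp only [map_mul, MulEquiv.apply_symm_apply]
      exact h1
  -- relIndex is preserved by the automorphism
  have hmapmap : ∀ K : Subgroup G,
      Subgroup.map e.symm.toMonoidHom (Subgroup.map e.toMonoidHom K) = K := by
    intro K
    ext x
    rw [Subgroup.mem_map_equiv, Subgroup.mem_map_equiv]
    simp
  have hrelmap : ∀ H K : Subgroup G,
      (Subgroup.map e.toMonoidHom H).relIndex (Subgroup.map e.toMonoidHom K) =
        H.relIndex K := by
    intro H K
    rw [Subgroup.map_equiv_eq_comap_symm' e H, Subgroup.relIndex_comap, hmapmap]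
  -- Δ is invariant
  have hΔinv : ∀ g : G, g ∈ Δ ↔ e g ∈ Δ := by
    intro g
    rw [hΔ, mem_fcCentre, mem_fcCentre]
    have hr : (Subgroup.centralizer {e g}).relIndex Γ =
        (Subgroup.centralizer {g}).relIndex Γ := by
      conv_lhs => rw [← hmapcen g, ← hmapΓ]
      exact hrelmap _ _
    rw [heΓ g, hr]
  have hΔmap : ∀ d : G, d ∈ Δ → e.symm d ∈ Δ := by
    intro d hd
    rw [hΔinv (e.symm d), MulEquiv.apply_symm_apply]
    exact hd
  -- conclude
  intro γ
  rw [← he_apply]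
  constructor
  · intro hγ
    obtain ⟨hγc, hγΓ⟩ := Subgroup.mem_inf.mp hγ
    apply Subgroup.mem_inf.mpr
    refine ⟨?_, (heΓ γ).mp hγΓ⟩
    apply Subgroup.mem_centralizer_iff.mpr
    intro d hd
    have hsd : e.symm d ∈ Δ := hΔmap d hd
    have h1 := Subgroup.mem_centralizer_iff.mp hγc _ hsd
    have h2 := congrArg e h1
    rw [map_mul, map_mul, MulEquiv.apply_symm_apply] at h2
    exact h2
  · intro hγ
    obtain ⟨hγc, hγΓ⟩ := Subgroup.mem_inf.mp hγ
    apply Subgroup.mem_inf.mpr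
    have hγΓ' : γ ∈ Γ := (heΓ γ).mpr hγΓ
    refine ⟨?_, hγΓ'⟩
    apply Subgroup.mem_centralizer_iff.mpr
    intro d hd
    have hed : e d ∈ Δ := (hΔinv d).mp hd
    have h2 := Subgroup.mem_centralizer_iff.mp hγc _ hed
    have h3 : e (d * γ) = e (γ * d) := by
      rw [map_mul, map_mul]; exact h2
    exact e.injective h3

/-- Lemma 3.12 (vabab): a virtually abelian group `Γ` of affine transformations of a
finite-dimensional real vector space contains an abelian subgroup `Γ̃` of finite index
such that any affine transformation `α` normalizing `Γ` also normalizes `Γ̃`. -/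
theorem virtually_abelian_characteristic_subgroup
    {V : Type*} [AddCommGroup V] [Module ℝ V] [FiniteDimensional ℝ V]
    (Γ : Subgroup (V ≃ᵃ[ℝ] V))
    (hva : ∃ Γ' : Subgroup (V ≃ᵃ[ℝ] V), Γ' ≤ Γ ∧ Γ'.relIndex Γ ≠ 0 ∧
      ∀ a ∈ Γ', ∀ b ∈ Γ', a * b = b * a) :
    ∃ Γt : Subgroup (V ≃ᵃ[ℝ] V), Γt ≤ Γ ∧ Γt.relIndex Γ ≠ 0 ∧
      (∀ a ∈ Γt, ∀ b ∈ Γt, a * b = b * a) ∧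
      ∀ α : V ≃ᵃ[ℝ] V,
        (∀ γ : V ≃ᵃ[ℝ] V, γ ∈ Γ ↔ α⁻¹ * γ * α ∈ Γ) →
        (∀ γ : V ≃ᵃ[ℝ] V, γ ∈ Γt ↔ α⁻¹ * γ * α ∈ Γt) := by
  exact virtually_abelian_characteristic_subgroup_aux Γ hva
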